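/- arXiv:2603.16481 — 6 statements merged into one kernel-verified Lean document; each statement's English description precedes it below -/
import Mathlib

section
/- For every vector of noise parameters σ ∈ ℝ^{n_con} with σ_j > 0 for all j, and for every feasible parameter vector θ ∈ ℝ^r (i.e., ‖θ‖² ≤ Γ_f² and (y − Aᵀθ)ᵀ P_j (y − Aᵀθ) ≤ Γ_{w,j}² for all j = 1,…,n_con), the upper bound qᵀθ ≤ qᵀθ^μ_σ + β_σ · √(qᵀ S_σ⁻¹ q) holds, where θ^μ_σ = A K̂_σ⁻¹ y, S_σ = I_r + A P_σ Aᵀ, and β_σ = √(Γ_f² + Σ_{j=1}^{n_con} Γ_{w,j}²/σ_j² − yᵀ K̂_σ⁻¹ y). (Finite-dimensional form of Theorem 1, statement i): weak-duality validity of the Gaussian-process-type bound for every σ.) -/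
open Matrix

/-- Aggregated noise-shape matrix `P_σ := ∑ j σ_j⁻² P_j`. -/
noncomputable def Pagg {N n_con : ℕ} (P : Fin n_con → Matrix (Fin N) (Fin N) ℝ)
    (σ : Fin n_con → ℝ) : Matrix (Fin N) (Fin N) ℝ :=
  ∑ j, ((σ j) ^ 2)⁻¹ • P j

/-- Gram matrix `K̂_σ := AᵀA + P_σ⁻¹`. -/
noncomputable def Khat {r N n_con : ℕ} (A : Matrix (Fin r) (Fin N) ℝ)
    (P : Fin n_con → Matrix (Fin N) (Fin N) ℝ) (σ : Fin n_con → ℝ) :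
    Matrix (Fin N) (Fin N) ℝ :=
  Aᵀ * A + (Pagg P σ)⁻¹

/-- Posterior-mean coefficient vector `θ^μ_σ := A K̂_σ⁻¹ y`. -/
noncomputable def θmean {r N n_con : ℕ} (A : Matrix (Fin r) (Fin N) ℝ) (y : Fin N → ℝ)
    (P : Fin n_con → Matrix (Fin N) (Fin N) ℝ) (σ : Fin n_con → ℝ) : Fin r → ℝ :=
  A *ᵥ ((Khat A P σ)⁻¹ *ᵥ y)

/-- Shape matrix `S_σ := I_r + A P_σ Aᵀ`. -/
noncomputable def Smat {r N n_con : ℕ} (A : Matrix (Fin r) (Fin N) ℝ)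
    (P : Fin n_con → Matrix (Fin N) (Fin N) ℝ) (σ : Fin n_con → ℝ) :
    Matrix (Fin r) (Fin r) ℝ :=
  1 + A * Pagg P σ * Aᵀ

/-- Scaling factor `β_σ := √(Γ_f² + ∑ j Γ_{w,j}²/σ_j² − yᵀ K̂_σ⁻¹ y)`. -/
noncomputable def βfac {r N n_con : ℕ} (A : Matrix (Fin r) (Fin N) ℝ) (y : Fin N → ℝ)
    (Γf : ℝ) (Γw : Fin n_con → ℝ) (P : Fin n_con → Matrix (Fin N) (Fin N) ℝ)
    (σ : Fin n_con → ℝ) : ℝ :=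
  Real.sqrt (Γf ^ 2 + ∑ j, (Γw j) ^ 2 / (σ j) ^ 2 - y ⬝ᵥ ((Khat A P σ)⁻¹ *ᵥ y))

lemma sum_mulVec'' {m n k : ℕ} (M : Fin k → Matrix (Fin m) (Fin n) ℝ) (v : Fin n → ℝ) :
    (∑ j, M j) *ᵥ v = ∑ j, M j *ᵥ v := by
  ext i
  simp only [Matrix.mulVec, dotProduct, Finset.sum_apply, Matrix.sum_apply,
    Finset.sum_mul]
  rw [Finset.sum_comm]

lemma dotProduct_sum'' {n k : ℕ} (x : Fin n → ℝ) (v : Fin k → Fin n → ℝ) :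
    x ⬝ᵥ (∑ j, v j) = ∑ j, x ⬝ᵥ v j := by
  simp only [dotProduct, Finset.sum_apply, Finset.mul_sum]
  rw [Finset.sum_comm]

lemma shift' {m n : ℕ} (M : Matrix (Fin m) (Fin n) ℝ) (x : Fin m → ℝ) (y : Fin n → ℝ) :
    x ⬝ᵥ (M *ᵥ y) = (Mᵀ *ᵥ x) ⬝ᵥ y := by
  rw [Matrix.dotProduct_mulVec, Matrix.mulVec_transpose]
/-- Theorem 1, statement i) (finite-dimensional form): for every positive noise-parameter
vector `σ` and every feasible `θ`, the GP-type dual bound is a valid upper bound on `qᵀθ`. -/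
theorem weak_duality_bound
    (r N n_con : ℕ) (hn : 1 ≤ n_con)
    (A : Matrix (Fin r) (Fin N) ℝ) (y : Fin N → ℝ) (q : Fin r → ℝ)
    (Γf : ℝ) (hΓf : 0 < Γf)
    (Γw : Fin n_con → ℝ) (hΓw : ∀ j, 0 < Γw j)
    (P : Fin n_con → Matrix (Fin N) (Fin N) ℝ)
    (hP : ∀ j, (P j).PosSemidef)
    (hPsum : (∑ j, P j).PosDef)
    (σ : Fin n_con → ℝ) (hσ : ∀ j, 0 < σ j)
    (θ : Fin r → ℝ)
    (hθf : θ ⬝ᵥ θ ≤ Γf ^ 2)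
    (hθw : ∀ j, (y - Aᵀ *ᵥ θ) ⬝ᵥ (P j *ᵥ (y - Aᵀ *ᵥ θ)) ≤ (Γw j) ^ 2) :
    q ⬝ᵥ θ ≤ q ⬝ᵥ θmean A y P σ
      + βfac A y Γf Γw P σ * Real.sqrt (q ⬝ᵥ ((Smat A P σ)⁻¹ *ᵥ q)) := by
  classical
  set Pσ := Pagg P σ with hPσdef
  set K := Khat A P σ with hKdef
  set S := Smat A P σ with hSdef
  set μ := θmean A y P σ with hμdef
  have hσ2 : ∀ j, (0:ℝ) < ((σ j) ^ 2)⁻¹ := fun j => by have := hσ j; positivity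
  have hPagg_pair : ∀ x z : Fin N → ℝ,
      x ⬝ᵥ (Pσ *ᵥ z) = ∑ j, ((σ j) ^ 2)⁻¹ * (x ⬝ᵥ (P j *ᵥ z)) := by
    intro x z
    rw [hPσdef]
    unfold Pagg
    rw [sum_mulVec'', dotProduct_sum'']
    refine Finset.sum_congr rfl fun j _ => ?_
    rw [smul_mulVec, dotProduct_smul, smul_eq_mul]
  have hPσ_pd : Pσ.PosDef := by
    refine Matrix.PosDef.of_dotProduct_mulVec_pos ?_ ?_
    · show Pσᴴ = Pσ
      rw [hPσdef]; unfold Pagg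
      rw [conjTranspose_sum]
      refine Finset.sum_congr rfl fun j _ => ?_
      rw [conjTranspose_smul, (hP j).1]
      norm_num
    · intro x hx
      rw [star_trivial, hPagg_pair]
      have hnn : ∀ j, 0 ≤ x ⬝ᵥ (P j *ᵥ x) := fun j => by
        have := (hP j).dotProduct_mulVec_nonneg x; rwa [star_trivial] at this
      have hsum : 0 < x ⬝ᵥ ((∑ j, P j) *ᵥ x) := by
        have := hPsum.dotProduct_mulVec_pos hx; rwa [star_trivial] at this
      rw [sum_mulVec'', dotProduct_sum''] at hsum
      obtain ⟨j0, _, hj0⟩ : ∃ j ∈ Finset.univ, 0 < x ⬝ᵥ (P j *ᵥ x) := by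
        by_contra hcon
        push_neg at hcon
        have : ∑ j, x ⬝ᵥ (P j *ᵥ x) ≤ 0 :=
          Finset.sum_nonpos fun j hj => hcon j hj
        linarith
      exact Finset.sum_pos' (fun j _ => mul_nonneg (hσ2 j).le (hnn j))
        ⟨j0, Finset.mem_univ j0, mul_pos (hσ2 j0) hj0⟩
  have hPσinv_pd : (Pσ⁻¹).PosDef := hPσ_pd.inv
  have hAtA : (Aᵀ * A).PosSemidef := by
    have := posSemidef_conjTranspose_mul_self A
    rwa [conjTranspose_eq_transpose_of_trivial] at this
  have hK_pd : K.PosDef := by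
    rw [hKdef]; unfold Khat
    rw [← hPσdef]
    exact Matrix.PosDef.posSemidef_add hAtA hPσinv_pd
  have hS_pd : S.PosDef := by
    rw [hSdef]; unfold Smat
    rw [← hPσdef]
    refine Matrix.PosDef.add_posSemidef Matrix.PosDef.one ?_
    have := hPσ_pd.posSemidef.mul_mul_conjTranspose_same A
    rwa [conjTranspose_eq_transpose_of_trivial] at this
  have hPσ_mul_inv : Pσ * Pσ⁻¹ = 1 := mul_nonsing_inv _ hPσ_pd.det_pos.ne'.isUnit
  have hPσ_inv_mul : Pσ⁻¹ * Pσ = 1 := nonsing_inv_mul _ hPσ_pd.det_pos.ne'.isUnit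
  have hK_mul_inv : K * K⁻¹ = 1 := mul_nonsing_inv _ hK_pd.det_pos.ne'.isUnit
  have hS_mul_inv : S * S⁻¹ = 1 := mul_nonsing_inv _ hS_pd.det_pos.ne'.isUnit
  have hPσT : Pσᵀ = Pσ := by
    rw [← conjTranspose_eq_transpose_of_trivial]; exact hPσ_pd.1
  have hST : Sᵀ = S := by
    rw [← conjTranspose_eq_transpose_of_trivial]; exact hS_pd.1
  have hPσinvT : (Pσ⁻¹)ᵀ = Pσ⁻¹ := by rw [transpose_nonsing_inv, hPσT]
  -- Step A : S *ᵥ μ = A *ᵥ (Pσ *ᵥ y)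
  have hSA : S * A = A * (Pσ * K) := by
    rw [hSdef, hKdef]; unfold Smat Khat
    rw [← hPσdef, Matrix.mul_add, hPσ_mul_inv, Matrix.add_mul, Matrix.one_mul,
      Matrix.mul_add, Matrix.mul_one, add_comm]
    congr 1
    simp only [Matrix.mul_assoc]
  have hμm : μ = A *ᵥ (K⁻¹ *ᵥ y) := by
    rw [hμdef]; unfold θmean; rw [← hKdef]
  have hSμ : S *ᵥ μ = A *ᵥ (Pσ *ᵥ y) := by
    have hSAK : S * A * K⁻¹ = A * Pσ := by
      rw [hSA, Matrix.mul_assoc, Matrix.mul_assoc, hK_mul_inv, Matrix.mul_one]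
    rw [hμm, mulVec_mulVec, mulVec_mulVec, hSAK, ← mulVec_mulVec]
  -- abbreviations
  set z := Aᵀ *ᵥ θ with hzdef
  set w := Pσ *ᵥ y with hwdef
  set m := K⁻¹ *ᵥ y with hmdef
  -- pieces of the quadratic identity
  have h1 : θ ⬝ᵥ (S *ᵥ θ) = θ ⬝ᵥ θ + z ⬝ᵥ (Pσ *ᵥ z) := by
    rw [hSdef]; unfold Smat
    rw [← hPσdef, add_mulVec, one_mulVec, dotProduct_add]
    congr 1
    rw [← mulVec_mulVec, ← mulVec_mulVec, shift' A, hzdef]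
  have h2 : θ ⬝ᵥ (S *ᵥ μ) = z ⬝ᵥ w := by
    rw [hSμ, shift' A]
  have h3 : μ ⬝ᵥ (S *ᵥ θ) = z ⬝ᵥ w := by
    rw [shift' S, hST, hSμ, dotProduct_comm, shift' A]
  have hKmy : K *ᵥ m = y := by
    rw [hmdef, mulVec_mulVec, hK_mul_inv, one_mulVec]
  have h4 : μ ⬝ᵥ (S *ᵥ μ) = y ⬝ᵥ w - y ⬝ᵥ m := by
    rw [hSμ, shift' A]
    have hAμ : Aᵀ *ᵥ μ = y - Pσ⁻¹ *ᵥ m := by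
      rw [hμm, mulVec_mulVec]
      have hsub : Aᵀ * A = K - Pσ⁻¹ := by
        rw [hKdef]; unfold Khat; rw [← hPσdef, add_sub_cancel_right]
      rw [hsub, sub_mulVec, hKmy]
    rw [hAμ, sub_dotProduct]
    congr 1
    rw [dotProduct_comm, shift', hPσinvT, hwdef, mulVec_mulVec, hPσ_inv_mul, one_mulVec,
      dotProduct_comm]
  have hyz : y ⬝ᵥ (Pσ *ᵥ z) = z ⬝ᵥ w := by
    rw [shift', hPσT, ← hwdef, dotProduct_comm]
  have h5 : (y - z) ⬝ᵥ (Pσ *ᵥ (y - z))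
      = y ⬝ᵥ w - 2 * (z ⬝ᵥ w) + z ⬝ᵥ (Pσ *ᵥ z) := by
    rw [mulVec_sub, dotProduct_sub, sub_dotProduct, sub_dotProduct, hyz, ← hwdef]
    ring
  have hquad : (θ - μ) ⬝ᵥ (S *ᵥ (θ - μ))
      = θ ⬝ᵥ (S *ᵥ θ) - θ ⬝ᵥ (S *ᵥ μ) - μ ⬝ᵥ (S *ᵥ θ) + μ ⬝ᵥ (S *ᵥ μ) := by
    rw [mulVec_sub, dotProduct_sub, sub_dotProduct, sub_dotProduct]
    ring
  have hkey : (θ - μ) ⬝ᵥ (S *ᵥ (θ - μ))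
      = θ ⬝ᵥ θ + (y - z) ⬝ᵥ (Pσ *ᵥ (y - z)) - y ⬝ᵥ m := by
    rw [hquad, h1, h2, h3, h4, h5]; ring
  -- feasibility bound
  have hsum_bound : (y - z) ⬝ᵥ (Pσ *ᵥ (y - z)) ≤ ∑ j, (Γw j) ^ 2 / (σ j) ^ 2 := by
    rw [hPagg_pair]
    refine Finset.sum_le_sum fun j _ => ?_
    calc ((σ j) ^ 2)⁻¹ * ((y - z) ⬝ᵥ (P j *ᵥ (y - z)))
        ≤ ((σ j) ^ 2)⁻¹ * (Γw j) ^ 2 := by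
          exact mul_le_mul_of_nonneg_left (hθw j) (hσ2 j).le
      _ = (Γw j) ^ 2 / (σ j) ^ 2 := by rw [div_eq_mul_inv, mul_comm]
  have huSu_le : (θ - μ) ⬝ᵥ (S *ᵥ (θ - μ))
      ≤ Γf ^ 2 + (∑ j, (Γw j) ^ 2 / (σ j) ^ 2) - y ⬝ᵥ m := by
    rw [hkey]; linarith
  have huSu_nonneg : 0 ≤ (θ - μ) ⬝ᵥ (S *ᵥ (θ - μ)) := by
    have := hS_pd.posSemidef.dotProduct_mulVec_nonneg (θ - μ); rwa [star_trivial] at this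
  have hc_nonneg : 0 ≤ Γf ^ 2 + (∑ j, (Γw j) ^ 2 / (σ j) ^ 2) - y ⬝ᵥ m :=
    le_trans huSu_nonneg huSu_le
  -- Cauchy–Schwarz step
  have hSsd := hS_pd.posSemidef
  set T := (open scoped MatrixOrder in CFC.sqrt S) with hTdef
  have hTT : T * T = S := by
    open scoped MatrixOrder in exact CFC.sqrt_mul_sqrt_self S hSsd.nonneg
  have hTtr : Tᵀ = T := by
    rw [← conjTranspose_eq_transpose_of_trivial]; open scoped MatrixOrder in exact (CFC.sqrt_nonneg S).posSemidef.1
  set u := θ - μ with hudef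
  set v := T *ᵥ u with hvdef
  set w2 := T *ᵥ (S⁻¹ *ᵥ q) with hw2def
  have hTw2 : Tᵀ *ᵥ w2 = q := by
    rw [hTtr, hw2def, mulVec_mulVec, hTT, mulVec_mulVec, hS_mul_inv, one_mulVec]
  have hvw : v ⬝ᵥ w2 = q ⬝ᵥ u := by
    rw [hvdef, dotProduct_comm, shift' T, hTw2]
  have hvv : v ⬝ᵥ v = u ⬝ᵥ (S *ᵥ u) := by
    rw [hvdef, dotProduct_comm, shift' T, hTtr, mulVec_mulVec, hTT]
    exact dotProduct_comm _ _
  have hww : w2 ⬝ᵥ w2 = q ⬝ᵥ (S⁻¹ *ᵥ q) := by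
    conv_lhs => rw [hw2def]
    rw [dotProduct_comm, shift' T, hTw2]
  have hcs : q ⬝ᵥ u ≤ Real.sqrt (u ⬝ᵥ (S *ᵥ u)) * Real.sqrt (q ⬝ᵥ (S⁻¹ *ᵥ q)) := by
    rw [← hvw, ← hvv, ← hww]
    have := Real.sum_mul_le_sqrt_mul_sqrt Finset.univ v w2
    simpa [dotProduct, pow_two] using this
  have hsq1 : Real.sqrt (u ⬝ᵥ (S *ᵥ u)) ≤ βfac A y Γf Γw P σ := by
    unfold βfac
    rw [← hKdef, ← hmdef]
    exact Real.sqrt_le_sqrt huSu_le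
  have hfin : q ⬝ᵥ u ≤ βfac A y Γf Γw P σ * Real.sqrt (q ⬝ᵥ (S⁻¹ *ᵥ q)) :=
    le_trans hcs (mul_le_mul_of_nonneg_right hsq1 (Real.sqrt_nonneg _))
  have hqu : q ⬝ᵥ u = q ⬝ᵥ θ - q ⬝ᵥ μ := by
    rw [hudef, dotProduct_sub]
  rw [hqu] at hfin
  linarith
end

section
/- Closed-form solution of the relaxed single-constraint problem (equation (24) of the paper): let P ∈ ℝ^{N×N} be positive definite, A ∈ ℝ^{r×N}, y ∈ ℝ^N, q ∈ ℝ^r with q ≠ 0, and Γ > 0 with Γ² ≥ yᵀ K̂⁻¹ y, where K̂ := AᵀA + P⁻¹, θ^μ := A K̂⁻¹ y, S := I_r + A P Aᵀ. Then the value qᵀθ^μ + √(Γ² − yᵀ K̂⁻¹ y) · √(qᵀ S⁻¹ q) is the greatest element (IsGreatest, i.e., maximum attained) of the set { qᵀθ : θ ∈ ℝ^r, ‖θ‖² + (y − Aᵀθ)ᵀ P (y − Aᵀθ) ≤ Γ² }, attained at θ* := θ^μ + (√(Γ² − yᵀ K̂⁻¹ y)/√(qᵀ S⁻¹ q)) ·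 S⁻¹ q. -/
open Matrix

lemma mulVec_dp {m n : Type*} [Fintype m] [Fintype n] (B : Matrix m n ℝ) (u : n → ℝ) (v : m → ℝ) :
    (B *ᵥ u) ⬝ᵥ v = u ⬝ᵥ (Bᵀ *ᵥ v) := by
  rw [dotProduct_comm, dotProduct_mulVec, mulVec_transpose, dotProduct_comm]

lemma dp_symm {n : Type*} [Fintype n] {B : Matrix n n ℝ} (hBt : Bᵀ = B) (a b : n → ℝ) :
    a ⬝ᵥ (B *ᵥ b) = b ⬝ᵥ (B *ᵥ a) := by
  rw [dotProduct_comm, mulVec_dp, hBt]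

lemma posDef_one' {n : Type*} [Fintype n] [DecidableEq n] : (1 : Matrix n n ℝ).PosDef :=
  PosDef.one

lemma transpose_eq_self_of_posSemidef {n : Type*} [Fintype n] {B : Matrix n n ℝ}
    (hB : B.PosSemidef) : Bᵀ = B := by
  have := hB.isHermitian
  rwa [Matrix.IsHermitian, conjTranspose_eq_transpose_of_trivial] at this

lemma cs_pos {n : Type*} [Fintype n] (B : Matrix n n ℝ) (hB : B.PosSemidef)
    (w u : n → ℝ) : (w ⬝ᵥ (B *ᵥ u)) ^ 2 ≤ (w ⬝ᵥ (B *ᵥ w)) * (u ⬝ᵥ (B *ᵥ u)) := by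
  have hBt := transpose_eq_self_of_posSemidef hB
  have hsym : ∀ a b : n → ℝ, a ⬝ᵥ (B *ᵥ b) = b ⬝ᵥ (B *ᵥ a) := fun a b => dp_symm hBt a b
  have hnn : ∀ t : ℝ, 0 ≤ (u - t • w) ⬝ᵥ (B *ᵥ (u - t • w)) := fun t => by
    simpa using hB.dotProduct_mulVec_nonneg (u - t • w)
  have expand : ∀ t : ℝ, (u - t • w) ⬝ᵥ (B *ᵥ (u - t • w)) =
      u ⬝ᵥ (B *ᵥ u) - 2 * t * (w ⬝ᵥ (B *ᵥ u)) + t ^ 2 * (w ⬝ᵥ (B *ᵥ w)) := fun t => by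
    simp only [mulVec_sub, mulVec_smul, dotProduct_sub, sub_dotProduct, smul_dotProduct,
      dotProduct_smul, smul_eq_mul, hsym u w]
    ring
  rcases eq_or_lt_of_le (hB.dotProduct_mulVec_nonneg w) with hw | hw
  · have h0 : (w : n → ℝ) ⬝ᵥ (B *ᵥ w) = 0 := by simpa using hw.symm
    have hlin : ∀ t : ℝ, 0 ≤ u ⬝ᵥ (B *ᵥ u) - 2 * t * (w ⬝ᵥ (B *ᵥ u)) := fun t => by
      have := hnn t; rw [expand t, h0] at this; simpa using this
    have hz : w ⬝ᵥ (B *ᵥ u) = 0 := by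
      by_contra hne
      have h1 := hlin ((u ⬝ᵥ (B *ᵥ u) + 1) / (2 * (w ⬝ᵥ (B *ᵥ u))))
      have h2 : 2 * ((u ⬝ᵥ (B *ᵥ u) + 1) / (2 * (w ⬝ᵥ (B *ᵥ u)))) * (w ⬝ᵥ (B *ᵥ u))
          = u ⬝ᵥ (B *ᵥ u) + 1 := by field_simp
      linarith [h1, h2]
    rw [hz, h0]
    simp
  · have key := hnn ((w ⬝ᵥ (B *ᵥ u)) / (w ⬝ᵥ (B *ᵥ w)))
    rw [expand] at key
    have h1 : 0 < w ⬝ᵥ (B *ᵥ w) := by simpa using hw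
    have hane : w ⬝ᵥ (B *ᵥ w) ≠ 0 := h1.ne'
    have e1 : ((w ⬝ᵥ (B *ᵥ u)) / (w ⬝ᵥ (B *ᵥ w))) ^ 2 * (w ⬝ᵥ (B *ᵥ w))
        = (w ⬝ᵥ (B *ᵥ u)) ^ 2 / (w ⬝ᵥ (B *ᵥ w)) := by
      field_simp
    have e2 : 2 * ((w ⬝ᵥ (B *ᵥ u)) / (w ⬝ᵥ (B *ᵥ w))) * (w ⬝ᵥ (B *ᵥ u))
        = 2 * ((w ⬝ᵥ (B *ᵥ u)) ^ 2 / (w ⬝ᵥ (B *ᵥ w))) := by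
      field_simp
    rw [e1, e2] at key
    have h5 : (w ⬝ᵥ (B *ᵥ u)) ^ 2 / (w ⬝ᵥ (B *ᵥ w)) ≤ u ⬝ᵥ (B *ᵥ u) := by linarith
    have h6 := (div_le_iff₀ h1).mp h5
    linarith [h6]

/-- Closed-form solution of the relaxed single-constraint problem (equation (24)): the value
`qᵀθ^μ + √(Γ² − yᵀK̂⁻¹y) √(qᵀS⁻¹q)` is the maximum (greatest, attained) of `qᵀθ` over the
aggregated ellipsoidal constraint set, attained at
`θ* = θ^μ + (√(Γ² − yᵀK̂⁻¹y)/√(qᵀS⁻¹q)) S⁻¹ q`. -/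
theorem relaxed_problem_closed_form
    (r N : ℕ)
    (P : Matrix (Fin N) (Fin N) ℝ) (hP : P.PosDef)
    (A : Matrix (Fin r) (Fin N) ℝ) (y : Fin N → ℝ)
    (q : Fin r → ℝ) (hq : q ≠ 0)
    (Γ : ℝ) (hΓ : 0 < Γ)
    (Khat : Matrix (Fin N) (Fin N) ℝ) (hKhat : Khat = Aᵀ * A + P⁻¹)
    (θμ : Fin r → ℝ) (hθμ : θμ = A *ᵥ (Khat⁻¹ *ᵥ y))
    (S : Matrix (Fin r) (Fin r) ℝ) (hS : S = 1 + A * P * Aᵀ)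
    (hΓy : y ⬝ᵥ (Khat⁻¹ *ᵥ y) ≤ Γ ^ 2) :
    IsGreatest
      {v : ℝ | ∃ θ : Fin r → ℝ,
        θ ⬝ᵥ θ + (y - Aᵀ *ᵥ θ) ⬝ᵥ (P *ᵥ (y - Aᵀ *ᵥ θ)) ≤ Γ ^ 2 ∧ v = q ⬝ᵥ θ}
      (q ⬝ᵥ θμ + Real.sqrt (Γ ^ 2 - y ⬝ᵥ (Khat⁻¹ *ᵥ y)) * Real.sqrt (q ⬝ᵥ (S⁻¹ *ᵥ q)))
    ∧
    (let θstar := θμ + (Real.sqrt (Γ ^ 2 - y ⬝ᵥ (Khat⁻¹ *ᵥ y))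
        / Real.sqrt (q ⬝ᵥ (S⁻¹ *ᵥ q))) • (S⁻¹ *ᵥ q);
      θstar ⬝ᵥ θstar + (y - Aᵀ *ᵥ θstar) ⬝ᵥ (P *ᵥ (y - Aᵀ *ᵥ θstar)) ≤ Γ ^ 2 ∧
      q ⬝ᵥ θstar
        = q ⬝ᵥ θμ + Real.sqrt (Γ ^ 2 - y ⬝ᵥ (Khat⁻¹ *ᵥ y)) * Real.sqrt (q ⬝ᵥ (S⁻¹ *ᵥ q))) := by
  -- basic positivity facts
  have hAAt : (Aᵀ * A).PosSemidef := by
    simpa [conjTranspose_eq_transpose_of_trivial] using posSemidef_conjTranspose_mul_self A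
  have hK : Khat.PosDef := hKhat ▸ Matrix.PosDef.posSemidef_add hAAt hP.inv
  have hAPA : (A * P * Aᵀ).PosSemidef := by
    simpa [conjTranspose_eq_transpose_of_trivial] using
      hP.posSemidef.mul_mul_conjTranspose_same A
  have hSpd : S.PosDef := hS ▸ posDef_one'.add_posSemidef hAPA
  have hSinv : S⁻¹.PosDef := hSpd.inv
  have hPdet : IsUnit P.det := hP.det_pos.ne'.isUnit
  have hKdet : IsUnit Khat.det := hK.det_pos.ne'.isUnit
  have hSdet : IsUnit S.det := hSpd.det_pos.ne'.isUnit
  have hKsym : Khatᵀ = Khat := transpose_eq_self_of_posSemidef hK.posSemidef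
  have hSsym : Sᵀ = S := transpose_eq_self_of_posSemidef hSpd.posSemidef
  have hPsym : Pᵀ = P := transpose_eq_self_of_posSemidef hP.posSemidef
  have hKinvsym : (Khat⁻¹)ᵀ = Khat⁻¹ := by rw [transpose_nonsing_inv, hKsym]
  have hPPinv : P * P⁻¹ = 1 := mul_nonsing_inv P hPdet
  have hSA : S * A = A * P * Khat := by
    rw [hS, hKhat, Matrix.add_mul, Matrix.one_mul, Matrix.mul_add,
      Matrix.mul_assoc A P P⁻¹, hPPinv, Matrix.mul_one,
      Matrix.mul_assoc (A * P) Aᵀ A]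
    abel
  have hSAK : S * A * Khat⁻¹ = A * P := by
    rw [hSA, Matrix.mul_assoc, mul_nonsing_inv _ hKdet, Matrix.mul_one]
  have hSθμ : S *ᵥ θμ = A *ᵥ (P *ᵥ y) := by
    rw [hθμ, mulVec_mulVec, mulVec_mulVec, mulVec_mulVec, ← hSAK, Matrix.mul_assoc]
  have hMAAP : Khat⁻¹ * (Aᵀ * A) * P = P - Khat⁻¹ := by
    have hAA : Aᵀ * A = Khat - P⁻¹ := by rw [hKhat]; abel
    rw [hAA, Matrix.mul_sub, nonsing_inv_mul _ hKdet, Matrix.sub_mul, Matrix.one_mul,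
      Matrix.mul_assoc, nonsing_inv_mul _ hPdet, Matrix.mul_one]
  have hKAAP : Khat⁻¹ * Aᵀ * A * P = P - Khat⁻¹ := by
    rw [Matrix.mul_assoc Khat⁻¹ Aᵀ A]; exact hMAAP
  have hθμSθμ : θμ ⬝ᵥ (S *ᵥ θμ) = y ⬝ᵥ (P *ᵥ y) - y ⬝ᵥ (Khat⁻¹ *ᵥ y) := by
    rw [hSθμ, hθμ, mulVec_dp, mulVec_dp Khat⁻¹, hKinvsym,
      mulVec_mulVec, mulVec_mulVec, mulVec_mulVec, hKAAP, sub_mulVec, dotProduct_sub]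
  -- completed-square identity
  have e1 : ∀ v : Fin r → ℝ, (Aᵀ *ᵥ v) ⬝ᵥ (P *ᵥ y) = v ⬝ᵥ (A *ᵥ (P *ᵥ y)) := fun v => by
    rw [mulVec_dp, transpose_transpose]
  have e2 : ∀ v : Fin r → ℝ, (Aᵀ *ᵥ v) ⬝ᵥ (P *ᵥ (Aᵀ *ᵥ v)) = v ⬝ᵥ ((A * P * Aᵀ) *ᵥ v) :=
    fun v => by
    rw [mulVec_dp, transpose_transpose, mulVec_mulVec, mulVec_mulVec]
  have hSv : ∀ v : Fin r → ℝ, v ⬝ᵥ (S *ᵥ v) = v ⬝ᵥ v + v ⬝ᵥ ((A * P * Aᵀ) *ᵥ v) := fun v => by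
    rw [hS, add_mulVec, one_mulVec, dotProduct_add]
  have key : ∀ θ : Fin r → ℝ,
      θ ⬝ᵥ θ + (y - Aᵀ *ᵥ θ) ⬝ᵥ (P *ᵥ (y - Aᵀ *ᵥ θ))
        = (θ - θμ) ⬝ᵥ (S *ᵥ (θ - θμ)) + y ⬝ᵥ (Khat⁻¹ *ᵥ y) := by
    intro θ
    have hSsub : (θ - θμ) ⬝ᵥ (S *ᵥ (θ - θμ))
        = θ ⬝ᵥ (S *ᵥ θ) - 2 * (θ ⬝ᵥ (S *ᵥ θμ)) + θμ ⬝ᵥ (S *ᵥ θμ) := by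
      simp only [mulVec_sub, dotProduct_sub, sub_dotProduct, dp_symm hSsym θμ θ]
      ring
    rw [hSsub, hSv θ, hθμSθμ, hSθμ]
    simp only [dotProduct_sub, sub_dotProduct, mulVec_sub, dp_symm hPsym y (Aᵀ *ᵥ θ),
      e1 θ, e2 θ]
    ring
  -- scalars
  have ha : 0 < q ⬝ᵥ (S⁻¹ *ᵥ q) := by simpa using hSinv.dotProduct_mulVec_pos hq
  have hρ2 : 0 ≤ Γ ^ 2 - y ⬝ᵥ (Khat⁻¹ *ᵥ y) := by linarith
  have hsa : 0 < Real.sqrt (q ⬝ᵥ (S⁻¹ *ᵥ q)) := Real.sqrt_pos.mpr ha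
  set w : Fin r → ℝ := S⁻¹ *ᵥ q with hw
  have hSw : S *ᵥ w = q := by
    rw [hw, mulVec_mulVec, mul_nonsing_inv _ hSdet, one_mulVec]
  have hwSw : w ⬝ᵥ (S *ᵥ w) = q ⬝ᵥ w := by rw [hSw, dotProduct_comm]
  set t : ℝ := Real.sqrt (Γ ^ 2 - y ⬝ᵥ (Khat⁻¹ *ᵥ y)) / Real.sqrt (q ⬝ᵥ (S⁻¹ *ᵥ q)) with ht
  have ht2 : t ^ 2 = (Γ ^ 2 - y ⬝ᵥ (Khat⁻¹ *ᵥ y)) / (q ⬝ᵥ (S⁻¹ *ᵥ q)) := by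
    rw [ht, div_pow, Real.sq_sqrt hρ2, Real.sq_sqrt ha.le]
  -- value and feasibility at θstar
  have hsub : (θμ + t • w) - θμ = t • w := by abel
  have fstar : (θμ + t • w) ⬝ᵥ (θμ + t • w)
      + (y - Aᵀ *ᵥ (θμ + t • w)) ⬝ᵥ (P *ᵥ (y - Aᵀ *ᵥ (θμ + t • w))) = Γ ^ 2 := by
    rw [key (θμ + t • w), hsub]
    have : (t • w) ⬝ᵥ (S *ᵥ (t • w)) = t ^ 2 * (w ⬝ᵥ (S *ᵥ w)) := by
      simp only [mulVec_smul, smul_dotProduct, dotProduct_smul, smul_eq_mul]; ring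
    rw [this, hwSw, ht2, ← hw, div_mul_cancel₀ _ ha.ne']
    ring
  have qθstar : q ⬝ᵥ (θμ + t • w)
      = q ⬝ᵥ θμ + Real.sqrt (Γ ^ 2 - y ⬝ᵥ (Khat⁻¹ *ᵥ y)) * Real.sqrt (q ⬝ᵥ (S⁻¹ *ᵥ q)) := by
    rw [dotProduct_add, dotProduct_smul, smul_eq_mul, ht, ← hw, div_mul_eq_mul_div,
      mul_div_assoc, Real.div_sqrt]
  refine ⟨⟨⟨θμ + t • w, by rw [fstar], qθstar.symm⟩, ?_⟩, by rw [fstar], qθstar⟩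
  -- upper bound
  rintro v ⟨θ, hcon, rfl⟩
  rw [key θ] at hcon
  have hu : (θ - θμ) ⬝ᵥ (S *ᵥ (θ - θμ)) ≤ Γ ^ 2 - y ⬝ᵥ (Khat⁻¹ *ᵥ y) := by linarith
  have hqu : q ⬝ᵥ (θ - θμ) = w ⬝ᵥ (S *ᵥ (θ - θμ)) := by
    rw [← hSw, mulVec_dp, hSsym]
  have hCS := cs_pos S hSpd.posSemidef w (θ - θμ)
  rw [hwSw] at hCS
  have huSu : 0 ≤ (θ - θμ) ⬝ᵥ (S *ᵥ (θ - θμ)) := by simpa using hSpd.posSemidef.dotProduct_mulVec_nonneg (θ - θμ)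
  have hsq : (q ⬝ᵥ (θ - θμ)) ^ 2 ≤ (Γ ^ 2 - y ⬝ᵥ (Khat⁻¹ *ᵥ y)) * (q ⬝ᵥ w) := by
    rw [hqu]
    calc (w ⬝ᵥ (S *ᵥ (θ - θμ))) ^ 2
        ≤ (q ⬝ᵥ w) * ((θ - θμ) ⬝ᵥ (S *ᵥ (θ - θμ))) := hCS
      _ ≤ (q ⬝ᵥ w) * (Γ ^ 2 - y ⬝ᵥ (Khat⁻¹ *ᵥ y)) :=
          mul_le_mul_of_nonneg_left hu ha.le
      _ = (Γ ^ 2 - y ⬝ᵥ (Khat⁻¹ *ᵥ y)) * (q ⬝ᵥ w) := mul_comm _ _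
  have hsplit : q ⬝ᵥ θ = q ⬝ᵥ θμ + q ⬝ᵥ (θ - θμ) := by
    rw [← dotProduct_add]
    congr 1
    abel
  rw [hsplit]
  have hle : q ⬝ᵥ (θ - θμ)
      ≤ Real.sqrt (Γ ^ 2 - y ⬝ᵥ (Khat⁻¹ *ᵥ y)) * Real.sqrt (q ⬝ᵥ w) := by
    calc q ⬝ᵥ (θ - θμ) ≤ |q ⬝ᵥ (θ - θμ)| := le_abs_self _
      _ = Real.sqrt ((q ⬝ᵥ (θ - θμ)) ^ 2) := (Real.sqrt_sq_eq_abs _).symm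
      _ ≤ Real.sqrt ((Γ ^ 2 - y ⬝ᵥ (Khat⁻¹ *ᵥ y)) * (q ⬝ᵥ w)) :=
          Real.sqrt_le_sqrt hsq
      _ = Real.sqrt (Γ ^ 2 - y ⬝ᵥ (Khat⁻¹ *ᵥ y)) * Real.sqrt (q ⬝ᵥ w) :=
          Real.sqrt_mul hρ2 _
  rw [hw] at hle
  linarith
end

section
/- Uniqueness of the worst-case function: in the setting of the closed-form relaxed problem, with P positive definite, q ≠ 0 and Γ² ≥ yᵀ K̂⁻¹ y, if θ ∈ ℝ^r satisfies the constraint ‖θ‖² + (y − Aᵀθ)ᵀ P (y − Aᵀθ) ≤ Γ² and achieves the optimal value qᵀθ = qᵀθ^μ + √(Γ² − yᵀ K̂⁻¹ y) · √(qᵀ S⁻¹ q), then θ = θ* := θ^μ + (√(Γ² − yᵀ K̂⁻¹ y)/√(qᵀ S⁻¹ q)) · S⁻¹ q; that is, the maximizer is unique. -/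
open Matrix

/-- Uniqueness of the worst-case maximizer of the relaxed single-constraint problem: any
feasible `θ` achieving the optimal value `qᵀθ^μ + √(Γ² − yᵀK̂⁻¹y) √(qᵀS⁻¹q)` equals
`θ* = θ^μ + (√(Γ² − yᵀK̂⁻¹y)/√(qᵀS⁻¹q)) S⁻¹ q`. -/
theorem relaxed_problem_unique_maximizer
    (r N : ℕ)
    (P : Matrix (Fin N) (Fin N) ℝ) (hP : P.PosDef)
    (A : Matrix (Fin r) (Fin N) ℝ) (y : Fin N → ℝ)
    (q : Fin r → ℝ) (hq : q ≠ 0)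
    (Γ : ℝ) (hΓ : 0 < Γ)
    (Khat : Matrix (Fin N) (Fin N) ℝ) (hKhat : Khat = Aᵀ * A + P⁻¹)
    (θμ : Fin r → ℝ) (hθμ : θμ = A *ᵥ (Khat⁻¹ *ᵥ y))
    (S : Matrix (Fin r) (Fin r) ℝ) (hS : S = 1 + A * P * Aᵀ)
    (hΓy : y ⬝ᵥ (Khat⁻¹ *ᵥ y) ≤ Γ ^ 2)
    (θ : Fin r → ℝ)
    (hfeas : θ ⬝ᵥ θ + (y - Aᵀ *ᵥ θ) ⬝ᵥ (P *ᵥ (y - Aᵀ *ᵥ θ)) ≤ Γ ^ 2)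
    (hopt : q ⬝ᵥ θ
      = q ⬝ᵥ θμ + Real.sqrt (Γ ^ 2 - y ⬝ᵥ (Khat⁻¹ *ᵥ y)) * Real.sqrt (q ⬝ᵥ (S⁻¹ *ᵥ q))) :
    θ = θμ + (Real.sqrt (Γ ^ 2 - y ⬝ᵥ (Khat⁻¹ *ᵥ y))
        / Real.sqrt (q ⬝ᵥ (S⁻¹ *ᵥ q))) • (S⁻¹ *ᵥ q) := by
  -- Positivity / symmetry basics
  have hPsym : Pᵀ = P := by have h : P.IsSymm := (by simpa using hP.1); exact h
  have hPdet : IsUnit P.det := hP.det_pos.ne'.isUnit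
  have hPP : P * P⁻¹ = 1 := mul_nonsing_inv P hPdet
  have hKpd : Khat.PosDef := by
    rw [hKhat]
    refine Matrix.PosDef.posSemidef_add ?_ hP.inv
    simpa using posSemidef_conjTranspose_mul_self A
  have hSpd : S.PosDef := by
    rw [hS]
    refine Matrix.PosDef.add_posSemidef Matrix.PosDef.one ?_
    simpa using hP.posSemidef.mul_mul_conjTranspose_same A
  have hSsym : Sᵀ = S := by have h : S.IsSymm := (by simpa using hSpd.1); exact h
  have hKK : Khat * Khat⁻¹ = 1 := mul_nonsing_inv _ hKpd.det_pos.ne'.isUnit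
  have hSS : S * S⁻¹ = 1 := mul_nonsing_inv _ hSpd.det_pos.ne'.isUnit
  -- dot product manipulation helpers
  have swap : ∀ (n : ℕ) (M : Matrix (Fin n) (Fin n) ℝ), Mᵀ = M →
      ∀ a b : Fin n → ℝ, a ⬝ᵥ M *ᵥ b = b ⬝ᵥ M *ᵥ a := by
    intro n M hM a b
    rw [dotProduct_mulVec, ← mulVec_transpose, hM, dotProduct_comm]
  have moveA : ∀ (a : Fin r → ℝ) (x : Fin N → ℝ),
      a ⬝ᵥ (A *ᵥ x) = (Aᵀ *ᵥ a) ⬝ᵥ x := by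
    intro a x; rw [dotProduct_mulVec, ← mulVec_transpose]
  -- key matrix identity: S * A = A * P * Khat, hence S θμ = A P y
  have lem0 : S * A = A * P * Khat := by
    rw [hS, hKhat, Matrix.add_mul, Matrix.one_mul, Matrix.mul_add,
      Matrix.mul_assoc A P P⁻¹, hPP, Matrix.mul_one,
      Matrix.mul_assoc (A * P) Aᵀ A]
    abel
  set v : Fin N → ℝ := Khat⁻¹ *ᵥ y with hv
  have hKv : Khat *ᵥ v = y := by rw [hv, mulVec_mulVec, hKK, one_mulVec]
  have hSθμ : S *ᵥ θμ = A *ᵥ (P *ᵥ y) := by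
    rw [hθμ, mulVec_mulVec v S A, lem0, ← Matrix.mulVec_mulVec v (A * P) Khat, hKv,
      ← Matrix.mulVec_mulVec y A P]
  -- scalar identity: y Khat⁻¹ y = y P y - θμ S θμ
  have e1 : y ⬝ᵥ v = y ⬝ᵥ (P *ᵥ y) - θμ ⬝ᵥ (S *ᵥ θμ) := by
    have h1 : θμ ⬝ᵥ (S *ᵥ θμ) = ((Khat - P⁻¹) *ᵥ v) ⬝ᵥ (P *ᵥ y) := by
      rw [hSθμ, hθμ, moveA, mulVec_mulVec,
        show Aᵀ * A = Khat - P⁻¹ by rw [hKhat]; abel]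
    have h3 : (P⁻¹ *ᵥ v) ⬝ᵥ (P *ᵥ y) = v ⬝ᵥ y := by
      rw [dotProduct_mulVec _ P, ← mulVec_transpose, hPsym, mulVec_mulVec, hPP, one_mulVec]
    rw [h1, sub_mulVec, sub_dotProduct, hKv, h3, dotProduct_comm v y]
    ring
  -- expand the feasibility constraint
  set z : Fin r → ℝ := θ - θμ with hz
  have quadid : θ ⬝ᵥ θ + (y - Aᵀ *ᵥ θ) ⬝ᵥ (P *ᵥ (y - Aᵀ *ᵥ θ))
      = z ⬝ᵥ (S *ᵥ z) + y ⬝ᵥ v := by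
    have c2 : (Aᵀ *ᵥ θ) ⬝ᵥ (P *ᵥ y) = θ ⬝ᵥ (A *ᵥ (P *ᵥ y)) := by
      rw [dotProduct_comm, dotProduct_mulVec, vecMul_transpose, dotProduct_comm]
    have cross : y ⬝ᵥ (P *ᵥ (Aᵀ *ᵥ θ)) = θ ⬝ᵥ (A *ᵥ (P *ᵥ y)) := by
      rw [swap N P hPsym, c2]
    have quad2 : θ ⬝ᵥ ((A * P * Aᵀ) *ᵥ θ) = (Aᵀ *ᵥ θ) ⬝ᵥ (P *ᵥ (Aᵀ *ᵥ θ)) := by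
      rw [show (A * P * Aᵀ) *ᵥ θ = A *ᵥ (P *ᵥ (Aᵀ *ᵥ θ)) by
        simp [mulVec_mulVec, Matrix.mul_assoc], moveA]
    have lhs1 : (y - Aᵀ *ᵥ θ) ⬝ᵥ (P *ᵥ (y - Aᵀ *ᵥ θ))
        = y ⬝ᵥ (P *ᵥ y) - 2 * (θ ⬝ᵥ (A *ᵥ (P *ᵥ y))) + θ ⬝ᵥ ((A * P * Aᵀ) *ᵥ θ) := by
      rw [mulVec_sub, dotProduct_sub, sub_dotProduct, sub_dotProduct, cross, c2, quad2]
      ring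
    have hθSθμ : θ ⬝ᵥ (S *ᵥ θμ) = θ ⬝ᵥ (A *ᵥ (P *ᵥ y)) := by rw [hSθμ]
    have zSz : z ⬝ᵥ (S *ᵥ z)
        = θ ⬝ᵥ (S *ᵥ θ) - 2 * (θ ⬝ᵥ (A *ᵥ (P *ᵥ y))) + θμ ⬝ᵥ (S *ᵥ θμ) := by
      rw [hz, mulVec_sub, dotProduct_sub, sub_dotProduct, sub_dotProduct,
        swap r S hSsym θμ θ, hθSθμ]
      ring
    have hSθ : θ ⬝ᵥ (S *ᵥ θ) = θ ⬝ᵥ θ + θ ⬝ᵥ ((A * P * Aᵀ) *ᵥ θ) := by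
      rw [hS, add_mulVec, dotProduct_add, one_mulVec]
    rw [lhs1, zSz, hSθ, e1]; ring
  have hzSz : z ⬝ᵥ (S *ᵥ z) ≤ Γ ^ 2 - y ⬝ᵥ v := by
    rw [quadid] at hfeas; linarith
  -- Cauchy-Schwarz equality argument
  set w : Fin r → ℝ := S⁻¹ *ᵥ q with hw
  have hSw : S *ᵥ w = q := by rw [hw, mulVec_mulVec, hSS, one_mulVec]
  have hwne : w ≠ 0 := fun h => hq (by rw [← hSw, h, mulVec_zero])
  have hαpos : 0 < q ⬝ᵥ w := by
    rw [← hSw, dotProduct_comm]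
    have := hSpd.re_dotProduct_pos hwne
    simpa using this
  set d : ℝ := Γ ^ 2 - y ⬝ᵥ v with hd
  have hdnn : 0 ≤ d := by rw [hd]; linarith
  set α : ℝ := q ⬝ᵥ w with hα
  have hsqα : Real.sqrt α * Real.sqrt α = α := Real.mul_self_sqrt hαpos.le
  have hsqd : Real.sqrt d * Real.sqrt d = d := Real.mul_self_sqrt hdnn
  have hsqαpos : 0 < Real.sqrt α := Real.sqrt_pos.mpr hαpos
  have hqz : q ⬝ᵥ z = Real.sqrt d * Real.sqrt α := by
    rw [hz, dotProduct_sub, hopt]; ring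
  have hzq : z ⬝ᵥ q = Real.sqrt d * Real.sqrt α := by rw [dotProduct_comm]; exact hqz
  have hwSw : w ⬝ᵥ (S *ᵥ w) = α := by rw [hSw, dotProduct_comm, hα]
  have hwSz : w ⬝ᵥ (S *ᵥ z) = Real.sqrt d * Real.sqrt α := by
    rw [swap r S hSsym, hSw, hzq]
  have hzSw : z ⬝ᵥ (S *ᵥ w) = Real.sqrt d * Real.sqrt α := by rw [hSw, hzq]
  set c : ℝ := Real.sqrt d / Real.sqrt α with hc
  set u : Fin r → ℝ := z - c • w with hu
  have huSu : u ⬝ᵥ (S *ᵥ u) = z ⬝ᵥ (S *ᵥ z) - d := by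
    have expand : u ⬝ᵥ (S *ᵥ u) = z ⬝ᵥ (S *ᵥ z) - c * (z ⬝ᵥ (S *ᵥ w))
        - c * (w ⬝ᵥ (S *ᵥ z)) + c * c * (w ⬝ᵥ (S *ᵥ w)) := by
      simp only [hu, mulVec_sub, dotProduct_sub, sub_dotProduct, mulVec_smul,
        dotProduct_smul, smul_dotProduct, smul_eq_mul]
      ring
    have h1 : Real.sqrt d / Real.sqrt α * (Real.sqrt d * Real.sqrt α) = d := by
      field_simp
      rw [Real.sq_sqrt hdnn]
    have h2 : Real.sqrt d / Real.sqrt α * (Real.sqrt d / Real.sqrt α) * α = d := by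
      rw [div_mul_div_comm, hsqd, hsqα, div_mul_cancel₀ _ hαpos.ne']
    rw [expand, hzSw, hwSz, hwSw, hc, h1, h2]
    ring
  have hu0 : u = 0 := by
    by_contra h
    have hpos := hSpd.re_dotProduct_pos h
    have : (0 : ℝ) < u ⬝ᵥ (S *ᵥ u) := by simpa using hpos
    rw [huSu] at this
    linarith
  have hzc : z = c • w := sub_eq_zero.mp hu0
  have : θ = θμ + c • w := by
    rw [← hzc, hz]
    abel
  simpa [hc, hd, hα, hw, hv] using this
end

section
/- Regularized least-squares characterization of the posterior mean: let P ∈ ℝ^{N×N} be positive definite, A ∈ ℝ^{r×N}, y ∈ ℝ^N, and set K̂ := AᵀA + P⁻¹ and θ^μ := A K̂⁻¹ y. Then yᵀ K̂⁻¹ y is the least value (IsLeast, minimum attained) of the function θ ↦ ‖θ‖² + (y − Aᵀθ)ᵀ P (y − Aᵀθ) over θ ∈ ℝ^r, and θ^μ is its unique minimizer. -/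
open Matrix

lemma symm_dot' {N : ℕ} {P : Matrix (Fin N) (Fin N) ℝ} (hP : Pᵀ = P) (a b : Fin N → ℝ) :
    a ⬝ᵥ (P *ᵥ b) = b ⬝ᵥ (P *ᵥ a) := by
  rw [dotProduct_mulVec, ← mulVec_transpose, hP, dotProduct_comm]

lemma dot_trans {r N : ℕ} (A : Matrix (Fin r) (Fin N) ℝ) (a : Fin r → ℝ) (b : Fin N → ℝ) :
    (Aᵀ *ᵥ a) ⬝ᵥ b = a ⬝ᵥ (A *ᵥ b) := by
  rw [mulVec_transpose, ← dotProduct_mulVec]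

/-- Regularized least-squares characterization of the posterior mean: `yᵀK̂⁻¹y` is the
minimum (least, attained) of `θ ↦ ‖θ‖² + (y − Aᵀθ)ᵀ P (y − Aᵀθ)`, and `θ^μ = A K̂⁻¹ y` is
its unique minimizer. -/
theorem posterior_mean_least_squares
    (r N : ℕ)
    (P : Matrix (Fin N) (Fin N) ℝ) (hP : P.PosDef)
    (A : Matrix (Fin r) (Fin N) ℝ) (y : Fin N → ℝ)
    (Khat : Matrix (Fin N) (Fin N) ℝ) (hKhat : Khat = Aᵀ * A + P⁻¹)
    (θμ : Fin r → ℝ) (hθμ : θμ = A *ᵥ (Khat⁻¹ *ᵥ y)) :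
    IsLeast
      {v : ℝ | ∃ θ : Fin r → ℝ,
        v = θ ⬝ᵥ θ + (y - Aᵀ *ᵥ θ) ⬝ᵥ (P *ᵥ (y - Aᵀ *ᵥ θ))}
      (y ⬝ᵥ (Khat⁻¹ *ᵥ y))
    ∧ θμ ⬝ᵥ θμ + (y - Aᵀ *ᵥ θμ) ⬝ᵥ (P *ᵥ (y - Aᵀ *ᵥ θμ)) = y ⬝ᵥ (Khat⁻¹ *ᵥ y)
    ∧ ∀ θ : Fin r → ℝ,
        θ ⬝ᵥ θ + (y - Aᵀ *ᵥ θ) ⬝ᵥ (P *ᵥ (y - Aᵀ *ᵥ θ)) = y ⬝ᵥ (Khat⁻¹ *ᵥ y) → θ = θμ := by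
  have hPs : Pᵀ = P := by
    have := hP.isHermitian.eq
    simpa [conjTranspose_eq_transpose_of_trivial] using this
  have hAtA : (Aᵀ * A).PosSemidef := by
    have := posSemidef_conjTranspose_mul_self A
    simpa [conjTranspose_eq_transpose_of_trivial] using this
  have hK : Khat.PosDef := by
    rw [hKhat]; exact Matrix.PosDef.posSemidef_add hAtA hP.inv
  have hKinv : Khat * Khat⁻¹ = 1 := mul_nonsing_inv _ hK.det_pos.ne'.isUnit
  set c : Fin N → ℝ := Khat⁻¹ *ᵥ y with hc
  have hyc : Khat *ᵥ c = y := by rw [hc, mulVec_mulVec, hKinv, one_mulVec]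
  have hPq : ∀ v : Fin N → ℝ, P *ᵥ (P⁻¹ *ᵥ v) = v := by
    intro v; rw [mulVec_mulVec, mul_nonsing_inv _ hP.det_pos.ne'.isUnit, one_mulVec]
  set q : Fin N → ℝ := P⁻¹ *ᵥ c with hq
  set w : Fin N → ℝ := Aᵀ *ᵥ θμ with hw
  have hy : y = w + q := by
    rw [← hyc, hKhat, add_mulVec, ← mulVec_mulVec, hw, hθμ, hq]
  set M : Matrix (Fin r) (Fin r) ℝ := 1 + A * P * Aᵀ with hM
  have hMpd : M.PosDef := by
    rw [hM]
    refine Matrix.PosDef.add_posSemidef Matrix.PosDef.one ?_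
    have := hP.posSemidef.mul_mul_conjTranspose_same A
    simpa [conjTranspose_eq_transpose_of_trivial] using this
  have key : ∀ θ : Fin r → ℝ,
      θ ⬝ᵥ θ + (y - Aᵀ *ᵥ θ) ⬝ᵥ (P *ᵥ (y - Aᵀ *ᵥ θ))
        = (θ - θμ) ⬝ᵥ (M *ᵥ (θ - θμ)) + y ⬝ᵥ c := by
    intro θ
    have hrhs : (θ - θμ) ⬝ᵥ (M *ᵥ (θ - θμ))
        = (θ - θμ) ⬝ᵥ (θ - θμ)
          + (Aᵀ *ᵥ (θ - θμ)) ⬝ᵥ (P *ᵥ (Aᵀ *ᵥ (θ - θμ))) := by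
      rw [hM, add_mulVec, one_mulVec, dotProduct_add]
      congr 1
      rw [← mulVec_mulVec, ← mulVec_mulVec, ← dot_trans]
    rw [hrhs, hy]
    set u : Fin N → ℝ := Aᵀ *ᵥ θ with hu
    have h1 : u ⬝ᵥ c = θ ⬝ᵥ θμ := by rw [hu, dot_trans, hθμ, hc]
    have h2 : w ⬝ᵥ c = θμ ⬝ᵥ θμ := by rw [hw, dot_trans, hθμ, hc]
    have hAθ : Aᵀ *ᵥ (θ - θμ) = u - w := by rw [mulVec_sub, hu, hw]
    rw [hAθ]
    simp only [mulVec_sub, mulVec_add, dotProduct_add, dotProduct_sub, add_dotProduct,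
      sub_dotProduct, hPq]
    rw [symm_dot' hPs q w, symm_dot' hPs q u, symm_dot' hPs w u]
    have hPqc : P *ᵥ q = c := hPq c
    simp only [hPq, hPqc, h1, h2]
    rw [dotProduct_comm θμ θ]
    ring
  have hmem : θμ ⬝ᵥ θμ + (y - Aᵀ *ᵥ θμ) ⬝ᵥ (P *ᵥ (y - Aᵀ *ᵥ θμ)) = y ⬝ᵥ c := by
    rw [key θμ, sub_self]
    simp
  refine ⟨⟨⟨θμ, hmem.symm⟩, ?_⟩, hmem, ?_⟩
  · rintro v ⟨θ, rfl⟩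
    rw [key θ]
    have := hMpd.posSemidef.dotProduct_mulVec_nonneg (θ - θμ)
    simp only [star_trivial] at this
    -- this : 0 ≤ (θ - θμ) ⬝ᵥ M *ᵥ (θ - θμ)  (maybe with RCLike.re)
    linarith
  · intro θ hθ
    rw [key θ] at hθ
    have h0 : (θ - θμ) ⬝ᵥ (M *ᵥ (θ - θμ)) = 0 := by linarith
    by_contra hne
    have hd : θ - θμ ≠ 0 := sub_ne_zero_of_ne hne
    have := hMpd.dotProduct_mulVec_pos hd
    simp only [star_trivial] at this
    linarith
end

section
/- Two-sided suboptimal bound for a fixed noise parameter (recovering the closed-form bounds of equation (21)): for every σ ∈ ℝ^{n_con} with all σ_j > 0 and every feasible θ ∈ ℝ^r, |qᵀθ − qᵀθ^μ_σ| ≤ β_σ · √(qᵀ S_σ⁻¹ q), where θ^μ_σ = A K̂_σ⁻¹ y, S_σ = I_r + A P_σ Aᵀ, and β_σ = √(Γ_f² + Σ_{j=1}^{n_con} Γ_{w,j}²/σ_j² − yᵀ K̂_σ⁻¹ y). -/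
open Matrix

/-- The GP-type dual function `F(σ) := qᵀθ^μ_σ + β_σ √(qᵀ S_σ⁻¹ q)`. -/
noncomputable def dualF {r N n_con : ℕ} (A : Matrix (Fin r) (Fin N) ℝ) (y : Fin N → ℝ)
    (q : Fin r → ℝ) (Γf : ℝ) (Γw : Fin n_con → ℝ)
    (P : Fin n_con → Matrix (Fin N) (Fin N) ℝ) (σ : Fin n_con → ℝ) : ℝ :=
  q ⬝ᵥ θmean A y P σ + βfac A y Γf Γw P σ * Real.sqrt (q ⬝ᵥ ((Smat A P σ)⁻¹ *ᵥ q))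

section Aux

variable {n : ℕ}

lemma herm_transpose {M : Matrix (Fin n) (Fin n) ℝ} (h : M.IsHermitian) : Mᵀ = M := by
  rw [← conjTranspose_eq_transpose_of_trivial]; exact h

lemma dot_symm {M : Matrix (Fin n) (Fin n) ℝ} (h : Mᵀ = M) (x z : Fin n → ℝ) :
    x ⬝ᵥ (M *ᵥ z) = (M *ᵥ x) ⬝ᵥ z := by
  rw [dotProduct_mulVec]
  conv_lhs => rw [← h]
  rw [vecMul_transpose]

lemma psd_cauchy_schwarz {M : Matrix (Fin n) (Fin n) ℝ} (hM : M.PosSemidef)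
    (u v : Fin n → ℝ) :
    (u ⬝ᵥ (M *ᵥ v)) ^ 2 ≤ (u ⬝ᵥ (M *ᵥ u)) * (v ⬝ᵥ (M *ᵥ v)) := by
  obtain ⟨B, hBB, hBT⟩ : ∃ B : Matrix (Fin n) (Fin n) ℝ, B * B = M ∧ Bᵀ = B := by
    open scoped MatrixOrder in
    exact ⟨CFC.sqrt M, CFC.sqrt_mul_sqrt_self M hM.nonneg,
      herm_transpose (CFC.sqrt_nonneg M).posSemidef.1⟩
  have key : ∀ a b : Fin n → ℝ, a ⬝ᵥ (M *ᵥ b) = (B *ᵥ a) ⬝ᵥ (B *ᵥ b) := by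
    intro a b
    have hb : M *ᵥ b = B *ᵥ (B *ᵥ b) := by rw [mulVec_mulVec, hBB]
    rw [hb, dot_symm hBT]
  rw [key u v, key u u, key v v]
  have h := Finset.sum_mul_sq_le_sq_mul_sq Finset.univ (B *ᵥ u) (B *ᵥ v)
  simpa [dotProduct, pow_two] using h

lemma quad_sum {N n_con : ℕ} (P : Fin n_con → Matrix (Fin N) (Fin N) ℝ)
    (c : Fin n_con → ℝ) (x : Fin N → ℝ) :
    x ⬝ᵥ ((∑ j, c j • P j) *ᵥ x) = ∑ j, c j * (x ⬝ᵥ (P j *ᵥ x)) := by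
  have h1 : (∑ j, c j • P j) *ᵥ x = ∑ j, c j • (P j *ᵥ x) := by
    trans (Matrix.mulVec.addMonoidHomLeft x) (∑ j, c j • P j)
    · rfl
    · rw [map_sum]
      exact Finset.sum_congr rfl fun j _ => smul_mulVec (c j) (P j) x
  rw [h1]
  simp only [dotProduct, Finset.sum_apply, Pi.smul_apply, smul_eq_mul, Finset.mul_sum]
  rw [Finset.sum_comm]
  exact Finset.sum_congr rfl fun j _ => Finset.sum_congr rfl fun i _ => by ring

end Aux

/-- Two-sided suboptimal bound for a fixed noise parameter (equation (21)): for every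
positive `σ` and every feasible `θ`, `|qᵀθ − qᵀθ^μ_σ| ≤ β_σ √(qᵀ S_σ⁻¹ q)`. -/
theorem two_sided_bound_fixed_sigma
    (r N n_con : ℕ) (hn : 1 ≤ n_con)
    (A : Matrix (Fin r) (Fin N) ℝ) (y : Fin N → ℝ) (q : Fin r → ℝ)
    (Γf : ℝ) (hΓf : 0 < Γf)
    (Γw : Fin n_con → ℝ) (hΓw : ∀ j, 0 < Γw j)
    (P : Fin n_con → Matrix (Fin N) (Fin N) ℝ)
    (hP : ∀ j, (P j).PosSemidef)
    (hPsum : (∑ j, P j).PosDef)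
    (σ : Fin n_con → ℝ) (hσ : ∀ j, 0 < σ j)
    (θ : Fin r → ℝ)
    (hθf : θ ⬝ᵥ θ ≤ Γf ^ 2)
    (hθw : ∀ j, (y - Aᵀ *ᵥ θ) ⬝ᵥ (P j *ᵥ (y - Aᵀ *ᵥ θ)) ≤ (Γw j) ^ 2) :
    |q ⬝ᵥ θ - q ⬝ᵥ θmean A y P σ|
      ≤ βfac A y Γf Γw P σ * Real.sqrt (q ⬝ᵥ ((Smat A P σ)⁻¹ *ᵥ q)) := by
  -- positivity of the aggregate matrix
  have hPmH : (Pagg P σ).IsHermitian := by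
    unfold Pagg
    rw [Matrix.IsHermitian, conjTranspose_sum]
    exact Finset.sum_congr rfl fun j _ => by
      rw [conjTranspose_smul, star_trivial, (hP j).1.eq]
  have hPm : (Pagg P σ).PosDef := by
    refine Matrix.PosDef.of_dotProduct_mulVec_pos hPmH fun x hx => ?_
    rw [star_trivial]
    have hq := quad_sum P (fun j => ((σ j) ^ 2)⁻¹) x
    rw [show (Pagg P σ) = ∑ j, ((σ j) ^ 2)⁻¹ • P j from rfl, hq]
    have hnn : ∀ j, 0 ≤ x ⬝ᵥ (P j *ᵥ x) := fun j => by
      have := (hP j).dotProduct_mulVec_nonneg x; rwa [star_trivial] at this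
    have hpos := hPsum.dotProduct_mulVec_pos hx
    rw [star_trivial] at hpos
    have hsum : x ⬝ᵥ ((∑ j, P j) *ᵥ x) = ∑ j, x ⬝ᵥ (P j *ᵥ x) := by
      have := quad_sum P (fun _ => (1:ℝ)) x
      simpa using this
    rw [hsum] at hpos
    obtain ⟨j0, hj0⟩ : ∃ j, 0 < x ⬝ᵥ (P j *ᵥ x) := by
      by_contra hcon
      push_neg at hcon
      have : ∑ j, x ⬝ᵥ (P j *ᵥ x) ≤ 0 :=
        Finset.sum_nonpos fun j _ => hcon j
      linarith
    have hterm : 0 < ((σ j0) ^ 2)⁻¹ * (x ⬝ᵥ (P j0 *ᵥ x)) :=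
      mul_pos (inv_pos.mpr (pow_pos (hσ j0) 2)) hj0
    calc (0:ℝ) < ((σ j0) ^ 2)⁻¹ * (x ⬝ᵥ (P j0 *ᵥ x)) := hterm
      _ ≤ ∑ j, ((σ j) ^ 2)⁻¹ * (x ⬝ᵥ (P j *ᵥ x)) :=
        Finset.single_le_sum (f := fun j => ((σ j) ^ 2)⁻¹ * (x ⬝ᵥ (P j *ᵥ x)))
          (fun j _ => mul_nonneg (inv_nonneg.mpr (sq_nonneg _)) (hnn j))
          (Finset.mem_univ j0)
  have hPmi : (Pagg P σ)⁻¹.PosDef := hPm.inv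
  have hAtA : (Aᵀ * A).PosSemidef := by
    have := Matrix.posSemidef_conjTranspose_mul_self A
    rwa [conjTranspose_eq_transpose_of_trivial] at this
  have hK : (Khat A P σ).PosDef := by
    rw [Khat]
    exact Matrix.PosDef.posSemidef_add hAtA hPmi
  have hAPA : (A * Pagg P σ * Aᵀ).PosSemidef := by
    have := hPm.posSemidef.mul_mul_conjTranspose_same A
    rwa [conjTranspose_eq_transpose_of_trivial] at this
  have hS : (Smat A P σ).PosDef := by
    rw [Smat]
    exact Matrix.PosDef.add_posSemidef Matrix.PosDef.one hAPA
  -- invertibility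
  have hPmu : IsUnit (Pagg P σ).det := hPm.det_pos.ne'.isUnit
  have hKu : IsUnit (Khat A P σ).det := hK.det_pos.ne'.isUnit
  have hSu : IsUnit (Smat A P σ).det := hS.det_pos.ne'.isUnit
  have hPmInv : Pagg P σ * (Pagg P σ)⁻¹ = 1 := Matrix.mul_nonsing_inv _ hPmu
  have hInvPm : (Pagg P σ)⁻¹ * Pagg P σ = 1 := Matrix.nonsing_inv_mul _ hPmu
  have hKKi : Khat A P σ * (Khat A P σ)⁻¹ = 1 := Matrix.mul_nonsing_inv _ hKu
  have hKiK : (Khat A P σ)⁻¹ * Khat A P σ = 1 := Matrix.nonsing_inv_mul _ hKu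
  have hSSi : Smat A P σ * (Smat A P σ)⁻¹ = 1 := Matrix.mul_nonsing_inv _ hSu
  -- transposes
  have hPmT : (Pagg P σ)ᵀ = Pagg P σ := herm_transpose hPmH
  have hKiT : ((Khat A P σ)⁻¹)ᵀ = (Khat A P σ)⁻¹ := herm_transpose hK.inv.1
  have hST : (Smat A P σ)ᵀ = Smat A P σ := herm_transpose hS.1
  -- key matrix identities
  have idA : A * Pagg P σ * Khat A P σ = Smat A P σ * A := by
    rw [Khat, Smat, Matrix.mul_add, Matrix.mul_assoc A (Pagg P σ) (Pagg P σ)⁻¹, hPmInv,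
      Matrix.mul_one, Matrix.add_mul, Matrix.one_mul, ← Matrix.mul_assoc, add_comm]
  have id1 : Smat A P σ * (A * (Khat A P σ)⁻¹) = A * Pagg P σ := by
    calc Smat A P σ * (A * (Khat A P σ)⁻¹)
        = (Smat A P σ * A) * (Khat A P σ)⁻¹ := by rw [Matrix.mul_assoc]
      _ = (A * Pagg P σ * Khat A P σ) * (Khat A P σ)⁻¹ := by rw [idA]
      _ = A * Pagg P σ * (Khat A P σ * (Khat A P σ)⁻¹) := by rw [Matrix.mul_assoc]
      _ = A * Pagg P σ := by rw [hKKi, Matrix.mul_one]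
  have idKi : (Khat A P σ)⁻¹ * (Aᵀ * A) * Pagg P σ + (Khat A P σ)⁻¹ = Pagg P σ := by
    have h2 : Khat A P σ * Pagg P σ = Aᵀ * A * Pagg P σ + 1 := by
      rw [Khat, add_mul, hInvPm]
    calc (Khat A P σ)⁻¹ * (Aᵀ * A) * Pagg P σ + (Khat A P σ)⁻¹
        = (Khat A P σ)⁻¹ * (Aᵀ * A * Pagg P σ + 1) := by
          rw [mul_add, mul_one, mul_assoc]
      _ = (Khat A P σ)⁻¹ * (Khat A P σ * Pagg P σ) := by rw [h2]
      _ = ((Khat A P σ)⁻¹ * Khat A P σ) * Pagg P σ := by rw [mul_assoc]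
      _ = Pagg P σ := by rw [hKiK, one_mul]
  -- vector facts
  set u : Fin N → ℝ := y - Aᵀ *ᵥ θ with hu
  set μ : Fin r → ℝ := θmean A y P σ with hμdef
  have hμ : μ = (A * (Khat A P σ)⁻¹) *ᵥ y := by rw [hμdef, θmean, mulVec_mulVec]
  have hSμ : Smat A P σ *ᵥ μ = (A * Pagg P σ) *ᵥ y := by
    rw [hμ, mulVec_mulVec, id1]
  -- scalar expansion lemmas
  have hswap1 : ∀ v : Fin r → ℝ, v ⬝ᵥ ((A * Pagg P σ) *ᵥ y) = (Aᵀ *ᵥ v) ⬝ᵥ (Pagg P σ *ᵥ y) := by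
    intro v
    rw [← mulVec_mulVec, dotProduct_mulVec v A, ← mulVec_transpose]
  have E1 : (θ - μ) ⬝ᵥ (Smat A P σ *ᵥ (θ - μ))
      = θ ⬝ᵥ (Smat A P σ *ᵥ θ) - 2 * (θ ⬝ᵥ ((A * Pagg P σ) *ᵥ y))
        + μ ⬝ᵥ ((A * Pagg P σ) *ᵥ y) := by
    have hswap : μ ⬝ᵥ (Smat A P σ *ᵥ θ) = θ ⬝ᵥ ((A * Pagg P σ) *ᵥ y) := by
      rw [dot_symm hST, hSμ, dotProduct_comm]
    rw [mulVec_sub, hSμ, sub_dotProduct, dotProduct_sub, dotProduct_sub, hswap]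
    ring
  have E2 : θ ⬝ᵥ (Smat A P σ *ᵥ θ)
      = θ ⬝ᵥ θ + θ ⬝ᵥ ((A * Pagg P σ * Aᵀ) *ᵥ θ) := by
    rw [Smat, add_mulVec, one_mulVec, dotProduct_add]
  have h3 : (Aᵀ *ᵥ θ) ⬝ᵥ (Pagg P σ *ᵥ (Aᵀ *ᵥ θ)) = θ ⬝ᵥ ((A * Pagg P σ * Aᵀ) *ᵥ θ) := by
    rw [← mulVec_mulVec, ← mulVec_mulVec, dotProduct_mulVec θ A, ← mulVec_transpose]
  have E3 : u ⬝ᵥ (Pagg P σ *ᵥ u)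
      = y ⬝ᵥ (Pagg P σ *ᵥ y) - 2 * (θ ⬝ᵥ ((A * Pagg P σ) *ᵥ y))
        + θ ⬝ᵥ ((A * Pagg P σ * Aᵀ) *ᵥ θ) := by
    have h1 : y ⬝ᵥ (Pagg P σ *ᵥ (Aᵀ *ᵥ θ)) = θ ⬝ᵥ ((A * Pagg P σ) *ᵥ y) := by
      rw [dot_symm hPmT, hswap1 θ, dotProduct_comm]
    have h2 : (Aᵀ *ᵥ θ) ⬝ᵥ (Pagg P σ *ᵥ y) = θ ⬝ᵥ ((A * Pagg P σ) *ᵥ y) := by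
      rw [hswap1 θ]
    rw [hu, mulVec_sub, sub_dotProduct, dotProduct_sub, dotProduct_sub, h1, h2, h3]
    ring
  have E4 : μ ⬝ᵥ ((A * Pagg P σ) *ᵥ y) + y ⬝ᵥ ((Khat A P σ)⁻¹ *ᵥ y)
      = y ⬝ᵥ (Pagg P σ *ᵥ y) := by
    have hstep : μ ⬝ᵥ ((A * Pagg P σ) *ᵥ y)
        = y ⬝ᵥ (((Khat A P σ)⁻¹ * (Aᵀ * A) * Pagg P σ) *ᵥ y) := by
      rw [hμ]
      rw [dotProduct_comm, dotProduct_mulVec _ (A * (Khat A P σ)⁻¹), ← mulVec_transpose,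
        transpose_mul, hKiT, dotProduct_comm]
      rw [← mulVec_mulVec, mulVec_mulVec, mulVec_mulVec]
      congr 1
      simp only [Matrix.mul_assoc]
    rw [hstep, ← dotProduct_add, ← add_mulVec, idKi]
  -- feasibility aggregation
  have hfeas : u ⬝ᵥ (Pagg P σ *ᵥ u) ≤ ∑ j, (Γw j) ^ 2 / (σ j) ^ 2 := by
    have hq := quad_sum P (fun j => ((σ j) ^ 2)⁻¹) u
    rw [show (Pagg P σ) = ∑ j, ((σ j) ^ 2)⁻¹ • P j from rfl, hq]
    refine Finset.sum_le_sum fun j _ => ?_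
    rw [div_eq_inv_mul]
    exact mul_le_mul_of_nonneg_left (hθw j) (inv_nonneg.mpr (sq_nonneg _))
  -- the completed-square identity and bound
  have hB : (θ - μ) ⬝ᵥ (Smat A P σ *ᵥ (θ - μ))
      = θ ⬝ᵥ θ + u ⬝ᵥ (Pagg P σ *ᵥ u) - y ⬝ᵥ ((Khat A P σ)⁻¹ *ᵥ y) := by
    rw [E1, E2, E3]
    linarith [E4]
  have hbound : (θ - μ) ⬝ᵥ (Smat A P σ *ᵥ (θ - μ))
      ≤ Γf ^ 2 + ∑ j, (Γw j) ^ 2 / (σ j) ^ 2 - y ⬝ᵥ ((Khat A P σ)⁻¹ *ᵥ y) := by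
    rw [hB]; linarith
  -- Cauchy–Schwarz
  have hq0 : 0 ≤ q ⬝ᵥ ((Smat A P σ)⁻¹ *ᵥ q) := by
    have := hS.inv.posSemidef.dotProduct_mulVec_nonneg q
    rwa [star_trivial] at this
  have h5 : ((Smat A P σ)⁻¹ *ᵥ q) ⬝ᵥ (Smat A P σ *ᵥ (θ - μ)) = q ⬝ᵥ (θ - μ) := by
    rw [dot_symm hST, mulVec_mulVec, hSSi, one_mulVec]
  have h6 : ((Smat A P σ)⁻¹ *ᵥ q) ⬝ᵥ (Smat A P σ *ᵥ ((Smat A P σ)⁻¹ *ᵥ q))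
      = q ⬝ᵥ ((Smat A P σ)⁻¹ *ᵥ q) := by
    rw [dot_symm hST, mulVec_mulVec, hSSi, one_mulVec]
  have hcs := psd_cauchy_schwarz hS.posSemidef ((Smat A P σ)⁻¹ *ᵥ q) (θ - μ)
  rw [h5, h6] at hcs
  -- final assembly
  have hqe : q ⬝ᵥ θ - q ⬝ᵥ μ = q ⬝ᵥ (θ - μ) := (dotProduct_sub q θ μ).symm
  rw [hqe]
  have hstep1 : |q ⬝ᵥ (θ - μ)|
      ≤ Real.sqrt (q ⬝ᵥ ((Smat A P σ)⁻¹ *ᵥ q)) * Real.sqrt ((θ - μ) ⬝ᵥ (Smat A P σ *ᵥ (θ - μ))) := by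
    rw [← Real.sqrt_mul hq0]
    calc |q ⬝ᵥ (θ - μ)| = Real.sqrt ((q ⬝ᵥ (θ - μ)) ^ 2) := (Real.sqrt_sq_eq_abs _).symm
      _ ≤ _ := Real.sqrt_le_sqrt hcs
  calc |q ⬝ᵥ (θ - μ)|
      ≤ Real.sqrt (q ⬝ᵥ ((Smat A P σ)⁻¹ *ᵥ q))
        * Real.sqrt ((θ - μ) ⬝ᵥ (Smat A P σ *ᵥ (θ - μ))) := hstep1
    _ ≤ Real.sqrt (q ⬝ᵥ ((Smat A P σ)⁻¹ *ᵥ q))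
        * Real.sqrt (Γf ^ 2 + ∑ j, (Γw j) ^ 2 / (σ j) ^ 2 - y ⬝ᵥ ((Khat A P σ)⁻¹ *ᵥ y)) :=
        mul_le_mul_of_nonneg_left (Real.sqrt_le_sqrt hbound) (Real.sqrt_nonneg _)
    _ = βfac A y Γf Γw P σ * Real.sqrt (q ⬝ᵥ ((Smat A P σ)⁻¹ *ᵥ q)) := by
        rw [βfac, mul_comm]
end

section
/- Convergence to the prior bound as the noise parameter grows: in the single-constraint case (n_con = 1, P ∈ ℝ^{N×N} positive definite), the dual bound F(σ) := qᵀθ^μ_σ + β_σ · √(qᵀ S_σ⁻¹ q) — where P_σ = σ⁻² P, K̂_σ = AᵀA + σ² P⁻¹, θ^μ_σ = A K̂_σ⁻¹ y, S_σ = I_r + σ⁻² A P Aᵀ, and β_σ = √(Γ_f² + Γ_w²/σ² − yᵀ K̂_σ⁻¹ y) — tends to the prior bound Γ_f · ‖q‖ as σ → ∞. -/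
open Matrix Filter

/-- The GP-type dual bound in the single-constraint case, as a function of the scalar noise
parameter `σ`: `F(σ) = qᵀθ^μ_σ + β_σ √(qᵀ S_σ⁻¹ q)` with `P_σ = σ⁻² P`,
`K̂_σ = AᵀA + P_σ⁻¹`, `θ^μ_σ = A K̂_σ⁻¹ y`, `S_σ = I + A P_σ Aᵀ`,
`β_σ = √(Γ_f² + Γ_w²/σ² − yᵀ K̂_σ⁻¹ y)`. -/
noncomputable def dualF1 {r N : ℕ} (A : Matrix (Fin r) (Fin N) ℝ) (y : Fin N → ℝ)
    (q : Fin r → ℝ) (Γf Γw : ℝ) (P : Matrix (Fin N) (Fin N) ℝ) (σ : ℝ) : ℝ :=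
  q ⬝ᵥ (A *ᵥ ((Aᵀ * A + ((σ ^ 2)⁻¹ • P)⁻¹)⁻¹ *ᵥ y))
    + Real.sqrt (Γf ^ 2 + Γw ^ 2 / σ ^ 2
        - y ⬝ᵥ ((Aᵀ * A + ((σ ^ 2)⁻¹ • P)⁻¹)⁻¹ *ᵥ y))
      * Real.sqrt (q ⬝ᵥ ((1 + A * ((σ ^ 2)⁻¹ • P) * Aᵀ)⁻¹ *ᵥ q))

private lemma psd_smul {n : ℕ} {M : Matrix (Fin n) (Fin n) ℝ} (h : M.PosSemidef)
    {c : ℝ} (hc : 0 ≤ c) : (c • M).PosSemidef := by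
  refine ⟨?_, fun x => ?_⟩
  · unfold Matrix.IsHermitian
    rw [Matrix.conjTranspose_smul, h.1]
    simp
  · exact (h.smul hc).2 x

private lemma psd_AtA {r N : ℕ} (A : Matrix (Fin r) (Fin N) ℝ) :
    (Aᵀ * A).PosSemidef := by
  have := Matrix.posSemidef_conjTranspose_mul_self A
  simpa using this

/-- inverse tends to 0 -/
private lemma Kinv_tendsto {r N : ℕ} (A : Matrix (Fin r) (Fin N) ℝ)
    (P : Matrix (Fin N) (Fin N) ℝ) (hP : P.PosDef) :
    Tendsto (fun σ : ℝ => (Aᵀ * A + ((σ ^ 2)⁻¹ • P)⁻¹)⁻¹) atTop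
      (nhds (0 : Matrix (Fin N) (Fin N) ℝ)) := by
  have htt : Tendsto (fun σ : ℝ => (σ ^ 2)⁻¹) atTop (nhds 0) :=
    tendsto_inv_atTop_zero.comp (tendsto_pow_atTop two_ne_zero)
  set g : ℝ → Matrix (Fin N) (Fin N) ℝ := fun t => (t • (Aᵀ * A) + P⁻¹)⁻¹ with hg
  have hPinv : (P⁻¹).PosDef := hP.inv
  have hg0 : ContinuousAt g 0 := by
    have h1 : Continuous fun t : ℝ => t • (Aᵀ * A) + P⁻¹ := by continuity
    have h2 : ContinuousAt Inv.inv ((0 : ℝ) • (Aᵀ * A) + P⁻¹) := by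
      apply continuousAt_matrix_inv
      rw [Ring.inverse_eq_inv']
      apply continuousAt_inv₀
      simp only [zero_smul, zero_add]
      exact hPinv.det_pos.ne'
    exact ContinuousAt.comp (x := (0:ℝ)) h2 h1.continuousAt
  have hmain : Tendsto (fun σ : ℝ => ((σ ^ 2)⁻¹ : ℝ) • g ((σ ^ 2)⁻¹)) atTop
      (nhds ((0 : ℝ) • g 0)) :=
    htt.smul ((hg0.tendsto).comp htt)
  rw [zero_smul] at hmain
  refine Tendsto.congr' ?_ hmain
  filter_upwards [eventually_ge_atTop (1 : ℝ)] with σ hσ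
  have hc : (0 : ℝ) < σ ^ 2 := by positivity
  set c := σ ^ 2
  have hPdet : IsUnit P.det := hP.det_pos.ne'.isUnit
  have hPP : P * P⁻¹ = 1 := Matrix.mul_nonsing_inv P hPdet
  have step1 : ((c⁻¹ : ℝ) • P)⁻¹ = c • P⁻¹ := by
    apply Matrix.inv_eq_right_inv
    rw [Matrix.smul_mul, Matrix.mul_smul, smul_smul, inv_mul_cancel₀ hc.ne', hPP, one_smul]
  set M : Matrix (Fin N) (Fin N) ℝ := (c⁻¹ : ℝ) • (Aᵀ * A) + P⁻¹ with hM
  have hMpd : M.PosDef :=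
    Matrix.PosDef.posSemidef_add (psd_smul (psd_AtA A) (by positivity)) hPinv
  have hMM : M * M⁻¹ = 1 := Matrix.mul_nonsing_inv M hMpd.det_pos.ne'.isUnit
  have step2 : Aᵀ * A + c • P⁻¹ = c • M := by
    rw [hM, smul_add, smul_smul, mul_inv_cancel₀ hc.ne', one_smul]
  have step3 : (c • M)⁻¹ = (c⁻¹ : ℝ) • M⁻¹ := by
    apply Matrix.inv_eq_right_inv
    rw [Matrix.smul_mul, Matrix.mul_smul, smul_smul, mul_inv_cancel₀ hc.ne', hMM, one_smul]
  rw [hg, step1, step2, step3]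

private lemma Sinv_tendsto {r N : ℕ} (A : Matrix (Fin r) (Fin N) ℝ)
    (P : Matrix (Fin N) (Fin N) ℝ) :
    Tendsto (fun σ : ℝ => (1 + A * ((σ ^ 2)⁻¹ • P) * Aᵀ)⁻¹) atTop
      (nhds (1 : Matrix (Fin r) (Fin r) ℝ)) := by
  have htt : Tendsto (fun σ : ℝ => (σ ^ 2)⁻¹) atTop (nhds 0) :=
    tendsto_inv_atTop_zero.comp (tendsto_pow_atTop two_ne_zero)
  have h1 : Continuous fun t : ℝ => (1 : Matrix (Fin r) (Fin r) ℝ) + A * (t • P) * Aᵀ := by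
    continuity
  have hca : ContinuousAt (fun t : ℝ => (1 : Matrix (Fin r) (Fin r) ℝ) + A * (t • P) * Aᵀ)
      (0 : ℝ) := h1.continuousAt
  have hS0 := Filter.Tendsto.comp hca.tendsto htt
  have hS : Tendsto (fun σ : ℝ => (1 : Matrix (Fin r) (Fin r) ℝ)
      + A * ((σ ^ 2)⁻¹ • P) * Aᵀ) atTop (nhds 1) := by
    simpa [Function.comp_def] using hS0
  have hinv : ContinuousAt Inv.inv (1 : Matrix (Fin r) (Fin r) ℝ) := by
    apply continuousAt_matrix_inv
    rw [Ring.inverse_eq_inv']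
    apply continuousAt_inv₀
    simp
  have := hinv.tendsto.comp hS
  simpa [Function.comp_def] using this

/-- Convergence to the prior bound: as `σ → ∞`, the dual bound `F(σ)` tends to
`Γ_f ‖q‖ = Γ_f √(qᵀq)`. -/
theorem dual_bound_tendsto_prior
    (r N : ℕ)
    (A : Matrix (Fin r) (Fin N) ℝ) (y : Fin N → ℝ) (q : Fin r → ℝ)
    (Γf : ℝ) (hΓf : 0 < Γf) (Γw : ℝ) (hΓw : 0 < Γw)
    (P : Matrix (Fin N) (Fin N) ℝ) (hP : P.PosDef) :
    Tendsto (dualF1 A y q Γf Γw P) atTop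
      (nhds (Γf * Real.sqrt (q ⬝ᵥ q))) := by
  have hK := Kinv_tendsto A P hP
  have hS := Sinv_tendsto A P
  -- first term
  have hc1 : Continuous fun M : Matrix (Fin N) (Fin N) ℝ => q ⬝ᵥ (A *ᵥ (M *ᵥ y)) :=
    continuous_const.dotProduct
      (continuous_const.matrix_mulVec (continuous_id.matrix_mulVec continuous_const))
  have h1 : Tendsto (fun σ : ℝ =>
      q ⬝ᵥ (A *ᵥ ((Aᵀ * A + ((σ ^ 2)⁻¹ • P)⁻¹)⁻¹ *ᵥ y))) atTop (nhds 0) := by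
    have := hc1.continuousAt.tendsto.comp hK
    simpa [Function.comp_def] using this
  -- yᵀ K⁻¹ y
  have hc2 : Continuous fun M : Matrix (Fin N) (Fin N) ℝ => y ⬝ᵥ (M *ᵥ y) :=
    continuous_const.dotProduct (continuous_id.matrix_mulVec continuous_const)
  have h2 : Tendsto (fun σ : ℝ =>
      y ⬝ᵥ ((Aᵀ * A + ((σ ^ 2)⁻¹ • P)⁻¹)⁻¹ *ᵥ y)) atTop (nhds 0) := by
    have := hc2.continuousAt.tendsto.comp hK
    simpa [Function.comp_def] using this
  -- Γw²/σ² → 0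
  have h3 : Tendsto (fun σ : ℝ => Γw ^ 2 / σ ^ 2) atTop (nhds 0) := by
    have htt : Tendsto (fun σ : ℝ => (σ ^ 2)⁻¹) atTop (nhds 0) :=
      tendsto_inv_atTop_zero.comp (tendsto_pow_atTop two_ne_zero)
    simpa [div_eq_mul_inv] using htt.const_mul (Γw ^ 2)
  -- β → Γf
  have hβ : Tendsto (fun σ : ℝ => Real.sqrt (Γf ^ 2 + Γw ^ 2 / σ ^ 2
      - y ⬝ᵥ ((Aᵀ * A + ((σ ^ 2)⁻¹ • P)⁻¹)⁻¹ *ᵥ y))) atTop (nhds Γf) := by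
    have harg : Tendsto (fun σ : ℝ => Γf ^ 2 + Γw ^ 2 / σ ^ 2
        - y ⬝ᵥ ((Aᵀ * A + ((σ ^ 2)⁻¹ • P)⁻¹)⁻¹ *ᵥ y)) atTop (nhds (Γf ^ 2)) := by
      have hconst : Tendsto (fun _ : ℝ => Γf ^ 2) atTop (nhds (Γf ^ 2)) :=
        tendsto_const_nhds
      have := (hconst.add h3).sub h2
      simpa using this
    have := (Real.continuous_sqrt.continuousAt.tendsto).comp harg
    simpa [Real.sqrt_sq hΓf.le, Function.comp_def] using this
  -- √(qᵀ S⁻¹ q) → √(qᵀq)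
  have hc4 : Continuous fun M : Matrix (Fin r) (Fin r) ℝ => q ⬝ᵥ (M *ᵥ q) :=
    continuous_const.dotProduct (continuous_id.matrix_mulVec continuous_const)
  have h4 : Tendsto (fun σ : ℝ =>
      Real.sqrt (q ⬝ᵥ ((1 + A * ((σ ^ 2)⁻¹ • P) * Aᵀ)⁻¹ *ᵥ q))) atTop
      (nhds (Real.sqrt (q ⬝ᵥ q))) := by
    have := (Real.continuous_sqrt.continuousAt.tendsto).comp (hc4.continuousAt.tendsto.comp hS)
    simpa [Function.comp_def] using this
  have := h1.add (hβ.mul h4)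
  rw [zero_add] at this
  exact this
end
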